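/- arXiv:1612.00332 — 3 statements merged into one kernel-verified Lean document; each statement's English description precedes it below -/
import Mathlib

section
/- The mass matrix of the basis (L̃_k) has the explicit form: for all i, j ≥ 1, ∫_{-1}^{1} L̃_i(x)·L̃_j(x) dx equals 2/((2i−1)(2i+3)) if i = j, equals −1/((2r+3)·√((2r+1)(2r+5))) with r = min{i,j} if |i−j| = 2, and equals 0 otherwise. -/
open Polynomial

/-- The Legendre polynomials, defined by the three-term recurrence
`L₀ = 1`, `L₁ = X`, `(k+2)·L_{k+2} = (2k+3)·X·L_{k+1} − (k+1)·L_k`. -/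
noncomputable def legendre : ℕ → Polynomial ℝ
  | 0 => 1
  | 1 => Polynomial.X
  | (k + 2) =>
      Polynomial.C ((2 * (k : ℝ) + 3) / ((k : ℝ) + 2)) * (Polynomial.X * legendre (k + 1))
        - Polynomial.C (((k : ℝ) + 1) / ((k : ℝ) + 2)) * legendre k

open intervalIntegral

lemma legendre_rec (k : ℕ) :
    C ((k:ℝ)+2) * legendre (k+2)
      = C (2*(k:ℝ)+3) * (X * legendre (k+1)) - C ((k:ℝ)+1) * legendre k := by
  have hk : (k:ℝ) + 2 ≠ 0 := by positivity
  have h1 : ((k:ℝ)+2) * ((2*(k:ℝ)+3)/((k:ℝ)+2)) = 2*(k:ℝ)+3 := by field_simp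
  have h2 : ((k:ℝ)+2) * (((k:ℝ)+1)/((k:ℝ)+2)) = (k:ℝ)+1 := by field_simp
  rw [legendre, mul_sub]
  congr 1
  · rw [← mul_assoc, ← C_mul, h1]
  · rw [← mul_assoc, ← C_mul, h2]

lemma eval_legendre_rec (k : ℕ) (x : ℝ) :
    ((k:ℝ)+2) * eval x (legendre (k+2))
      = (2*(k:ℝ)+3) * (x * eval x (legendre (k+1))) - ((k:ℝ)+1) * eval x (legendre k) := by
  have := congrArg (eval x) (legendre_rec k)
  simpa using this

lemma legendre_eval_one (n : ℕ) : eval (1:ℝ) (legendre n) = 1 := by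
  induction n using Nat.twoStepInduction with
  | zero => simp [legendre]
  | one => simp [legendre]
  | more k ih1 ih2 =>
    have hk : (k:ℝ) + 2 ≠ 0 := by positivity
    have h := eval_legendre_rec k 1
    rw [ih1, ih2] at h
    have h' : ((k:ℝ)+2) * eval 1 (legendre (k+2)) = ((k:ℝ)+2) * 1 := by linear_combination h
    exact mul_left_cancel₀ hk h'

lemma legendre_eval_neg_one (n : ℕ) : eval (-1:ℝ) (legendre n) = (-1)^n := by
  induction n using Nat.twoStepInduction with
  | zero => simp [legendre]
  | one => simp [legendre]
  | more k ih1 ih2 =>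
    have hk : (k:ℝ) + 2 ≠ 0 := by positivity
    have h := eval_legendre_rec k (-1)
    rw [ih1, ih2] at h
    have h' : ((k:ℝ)+2) * eval (-1:ℝ) (legendre (k+2)) = ((k:ℝ)+2) * (-1)^(k+2) := by
      rw [h, pow_succ, pow_succ]; ring
    exact mul_left_cancel₀ hk h'

noncomputable def lc : ℕ → ℝ
  | 0 => 1
  | (n+1) => (2*(n:ℝ)+1)/((n:ℝ)+1) * lc n

noncomputable def dd : ℕ → ℝ
  | 0 => 2
  | (n+1) => ((n:ℝ)+1)/(2*(n:ℝ)+3) * dd n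

lemma lc_pos (n : ℕ) : 0 < lc n := by
  induction n with
  | zero => norm_num [lc]
  | succ n ih =>
    rw [lc]
    have h1 : (0:ℝ) < (2*(n:ℝ)+1)/((n:ℝ)+1) := by positivity
    exact mul_pos h1 ih

lemma natDegree_legendre_le (n : ℕ) : (legendre n).natDegree ≤ n := by
  induction n using Nat.twoStepInduction with
  | zero => simp [legendre]
  | one => simp [legendre]
  | more k ih1 ih2 =>
    rw [legendre]
    refine le_trans (natDegree_sub_le _ _) ?_
    refine max_le ?_ ?_
    · refine le_trans (natDegree_C_mul_le _ _) ?_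
      refine le_trans (natDegree_mul_le (p := X) (q := legendre (k+1))) ?_
      have hX : (X : Polynomial ℝ).natDegree ≤ 1 := natDegree_X_le
      omega
    · refine le_trans (natDegree_C_mul_le _ _) (le_trans ih1 (by omega))

lemma coeff_legendre (n : ℕ) : (legendre n).coeff n = lc n := by
  induction n using Nat.twoStepInduction with
  | zero => simp [legendre, lc]
  | one => simp [legendre, lc]
  | more k ih1 ih2 =>
    have hk : (k:ℝ) + 2 ≠ 0 := by positivity
    have h := congrArg (fun p : Polynomial ℝ => p.coeff (k+2)) (legendre_rec k)
    simp only [coeff_sub, coeff_C_mul] at h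
    have hxm : (X * legendre (k+1)).coeff (k+2) = (legendre (k+1)).coeff (k+1) :=
      coeff_X_mul _ (k+1)
    rw [hxm, ih2] at h
    have hz : (legendre k).coeff (k+2) = 0 := by
      apply coeff_eq_zero_of_natDegree_lt
      exact lt_of_le_of_lt (natDegree_legendre_le k) (by omega)
    rw [hz] at h
    have hlc : lc (k+2) = (2*((k:ℝ)+1)+1)/((k:ℝ)+1+1) * lc (k+1) := by
      rw [lc]; push_cast; ring_nf
    have h' : ((k:ℝ)+2) * (legendre (k+2)).coeff (k+2) = ((k:ℝ)+2) * lc (k+2) := by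
      rw [h, hlc]
      field_simp
      ring
    exact mul_left_cancel₀ hk h'

lemma deriv_rec (k : ℕ) (x : ℝ) :
    ((k:ℝ)+2) * eval x (derivative (legendre (k+2)))
      = (2*(k:ℝ)+3) * (eval x (legendre (k+1)) + x * eval x (derivative (legendre (k+1))))
        - ((k:ℝ)+1) * eval x (derivative (legendre k)) := by
  have h := congrArg (fun p => eval x (derivative p)) (legendre_rec k)
  simp only [derivative_mul, derivative_sub, derivative_C, derivative_X, eval_add, eval_sub,
    eval_mul, eval_C, eval_X, zero_mul, one_mul, eval_zero, zero_add] at h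
  linarith [h]

lemma legendre_AB (k : ℕ) :
    (∀ x : ℝ, eval x (derivative (legendre (k+1)))
        = x * eval x (derivative (legendre k)) + ((k:ℝ)+1) * eval x (legendre k))
    ∧ (∀ x : ℝ, x * eval x (derivative (legendre (k+1)))
        = eval x (derivative (legendre k)) + ((k:ℝ)+1) * eval x (legendre (k+1))) := by
  induction k with
  | zero =>
    constructor <;> intro x <;> simp [legendre]
  | succ k ih =>
    obtain ⟨hA, hB⟩ := ih
    have hk : (k:ℝ) + 2 ≠ 0 := by positivity
    constructor
    · intro x
      have h' : ((k:ℝ)+2) * eval x (derivative (legendre (k+2)))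
          = ((k:ℝ)+2) * (x * eval x (derivative (legendre (k+1))) + ((k:ℝ)+1+1) * eval x (legendre (k+1))) := by
        rw [deriv_rec k x]
        linear_combination ((k:ℝ)+1) * hB x
      have := mul_left_cancel₀ hk h'
      push_cast
      linarith [this]
    · intro x
      have h' : ((k:ℝ)+2) * (x * eval x (derivative (legendre (k+2))))
          = ((k:ℝ)+2) * (eval x (derivative (legendre (k+1))) + ((k:ℝ)+1+1) * eval x (legendre (k+2))) := by
        have hd := deriv_rec k x
        have hr := eval_legendre_rec k x
        linear_combination x * hd - ((k:ℝ)+2) * hr + (2*(k:ℝ)+3) * x * hB x - ((k:ℝ)+2) * hA x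
      have := mul_left_cancel₀ hk h'
      push_cast
      linarith [this]

lemma deriv_ident (k : ℕ) (x : ℝ) :
    eval x (derivative (legendre (k+2)))
      = eval x (derivative (legendre k)) + (2*(k:ℝ)+3) * eval x (legendre (k+1)) := by
  have hA := (legendre_AB (k+1)).1 x
  have hB := (legendre_AB k).2 x
  push_cast at hA
  linarith [hA, hB]

noncomputable def J (m n : ℕ) : ℝ := ∫ x in (-1:ℝ)..1, x^m * eval x (legendre n)

lemma intble_pow_mul (m : ℕ) (p : Polynomial ℝ) :
    IntervalIntegrable (fun x : ℝ => x^m * eval x p) MeasureTheory.volume (-1) 1 :=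
  (Continuous.mul (continuous_pow m) p.continuous).intervalIntegrable _ _

lemma J_ibp (m n : ℕ) :
    (2*(n:ℝ)+3) * J m (n+1) = -(m:ℝ) * (J (m-1) (n+2) - J (m-1) n) := by
  set q : Polynomial ℝ := legendre (n+2) - legendre n with hq
  have hu : ∀ x ∈ Set.uIcc (-1:ℝ) 1, HasDerivAt (fun y : ℝ => y^m) ((m:ℝ) * x^(m-1)) x :=
    fun x _ => hasDerivAt_pow m x
  have hv : ∀ x ∈ Set.uIcc (-1:ℝ) 1, HasDerivAt (fun y : ℝ => eval y q)
      ((2*(n:ℝ)+3) * eval x (legendre (n+1))) x := by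
    intro x _
    have h := q.hasDerivAt x
    have he : eval x (derivative q) = (2*(n:ℝ)+3) * eval x (legendre (n+1)) := by
      rw [hq]
      simp only [derivative_sub, eval_sub]
      have := deriv_ident n x
      linarith [this]
    rwa [he] at h
  have hu' : IntervalIntegrable (fun x : ℝ => (m:ℝ) * x^(m-1)) MeasureTheory.volume (-1) 1 :=
    (Continuous.mul continuous_const (continuous_pow _)).intervalIntegrable _ _
  have hv' : IntervalIntegrable (fun x : ℝ => (2*(n:ℝ)+3) * eval x (legendre (n+1)))
      MeasureTheory.volume (-1) 1 :=
    (Continuous.mul continuous_const (legendre (n+1)).continuous).intervalIntegrable _ _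
  have key := intervalIntegral.integral_mul_deriv_eq_deriv_mul hu hv hu' hv'
  have hb1 : eval (1:ℝ) q = 0 := by
    rw [hq]; simp [legendre_eval_one]
  have hbm : eval (-1:ℝ) q = 0 := by
    rw [hq]; simp only [eval_sub, legendre_eval_neg_one]; ring
  rw [hb1, hbm] at key
  have lhs_eq : (∫ x in (-1:ℝ)..1, x^m * ((2*(n:ℝ)+3) * eval x (legendre (n+1))))
      = (2*(n:ℝ)+3) * J m (n+1) := by
    rw [J, ← intervalIntegral.integral_const_mul]
    congr 1; ext x; ring
  have rhs_eq : (∫ x in (-1:ℝ)..1, ((m:ℝ) * x^(m-1)) * eval x q)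
      = (m:ℝ) * (J (m-1) (n+2) - J (m-1) n) := by
    rw [hq]
    have : (fun x : ℝ => ((m:ℝ) * x^(m-1)) * eval x (legendre (n+2) - legendre n))
        = fun x : ℝ => (m:ℝ) * (x^(m-1) * eval x (legendre (n+2))) -
            (m:ℝ) * (x^(m-1) * eval x (legendre n)) := by
      ext x; simp only [eval_sub]; ring
    rw [this, intervalIntegral.integral_sub, intervalIntegral.integral_const_mul,
      intervalIntegral.integral_const_mul, J, J]
    · ring
    · exact (Continuous.mul continuous_const ((continuous_pow _).mul (legendre (n+2)).continuous)).intervalIntegrable _ _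
    · exact (Continuous.mul continuous_const ((continuous_pow _).mul (legendre n).continuous)).intervalIntegrable _ _
  rw [lhs_eq, rhs_eq] at key
  rw [key]; ring

lemma Jz : ∀ m n : ℕ, m < n → J m n = 0 := by
  intro m
  induction m with
  | zero =>
    intro n hn
    obtain ⟨n', rfl⟩ : ∃ n', n = n' + 1 := ⟨n - 1, by omega⟩
    have h := J_ibp 0 n'
    have hne : (2*(n':ℝ)+3) ≠ 0 := by positivity
    have h0 : (2*(n':ℝ)+3) * J 0 (n'+1) = 0 := by rw [h]; ring
    exact (mul_eq_zero.mp h0).resolve_left hne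
  | succ m ih =>
    intro n hn
    obtain ⟨n', rfl⟩ : ∃ n', n = n' + 1 := ⟨n - 1, by omega⟩
    have h := J_ibp (m+1) n'
    have h1 : J ((m+1)-1) (n'+2) = 0 := ih _ (by omega)
    have h2 : J ((m+1)-1) n' = 0 := ih _ (by omega)
    rw [h1, h2] at h
    have hne : (2*(n':ℝ)+3) ≠ 0 := by positivity
    have : (2*(n':ℝ)+3) * J (m+1) (n'+1) = 0 := by rw [h]; ring
    exact (mul_eq_zero.mp this).resolve_left hne

lemma Jd : ∀ n : ℕ, J n n = dd n := by
  intro n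
  induction n with
  | zero =>
    have : J 0 0 = ∫ x in (-1:ℝ)..1, (1:ℝ) := by
      rw [J]; congr 1; ext x; simp [legendre]
    rw [this, dd]
    simp
    norm_num
  | succ n ih =>
    have h := J_ibp (n+1) n
    have h1 : J ((n+1)-1) (n+2) = 0 := Jz _ _ (by omega)
    rw [h1] at h
    have h2 : ((n+1) - 1 : ℕ) = n := by omega
    rw [h2, ih] at h
    have hne : (2*(n:ℝ)+3) ≠ 0 := by positivity
    have hd : dd (n+1) = ((n:ℝ)+1)/(2*(n:ℝ)+3) * dd n := by rw [dd]
    have h' : (2*(n:ℝ)+3) * J (n+1) (n+1) = (2*(n:ℝ)+3) * dd (n+1) := by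
      rw [h, hd]
      push_cast
      field_simp
      ring
    exact mul_left_cancel₀ hne h'

lemma integral_poly_mul (p q : Polynomial ℝ) :
    (∫ x in (-1:ℝ)..1, eval x p * eval x q)
      = ∑ m ∈ Finset.range (p.natDegree + 1), p.coeff m * ∫ x in (-1:ℝ)..1, x^m * eval x q := by
  have h1 : (∫ x in (-1:ℝ)..1, eval x p * eval x q)
      = ∫ x in (-1:ℝ)..1, ∑ m ∈ Finset.range (p.natDegree + 1), p.coeff m * (x^m * eval x q) := by
    congr 1; ext x
    rw [eval_eq_sum_range, Finset.sum_mul]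
    exact Finset.sum_congr rfl fun m _ => by ring
  rw [h1, intervalIntegral.integral_finset_sum]
  · exact Finset.sum_congr rfl fun m _ => intervalIntegral.integral_const_mul _ _
  · intro m _
    exact (Continuous.mul continuous_const ((continuous_pow _).mul q.continuous)).intervalIntegrable _ _

lemma O_lt (a b : ℕ) (h : a < b) :
    (∫ x in (-1:ℝ)..1, eval x (legendre a) * eval x (legendre b)) = 0 := by
  rw [integral_poly_mul]
  apply Finset.sum_eq_zero
  intro m hm
  have hlt : m < b := by
    have h1 := natDegree_legendre_le a
    have h2 := Finset.mem_range.mp hm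
    omega
  rw [show (∫ x in (-1:ℝ)..1, x^m * eval x (legendre b)) = J m b from rfl, Jz m b hlt, mul_zero]

lemma lc_mul_dd (n : ℕ) : lc n * dd n = 2 / (2*(n:ℝ)+1) := by
  induction n with
  | zero => norm_num [lc, dd]
  | succ n ih =>
    have h1 : (n:ℝ)+1 ≠ 0 := by positivity
    have h2 : 2*(n:ℝ)+3 ≠ 0 := by positivity
    have h3 : 2*(n:ℝ)+1 ≠ 0 := by positivity
    have hstep : lc (n+1) * dd (n+1) = (2*(n:ℝ)+1)/(2*(n:ℝ)+3) * (lc n * dd n) := by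
      rw [lc, dd]; field_simp
    rw [hstep, ih]
    push_cast
    field_simp
    ring

lemma natDegree_legendre (n : ℕ) : (legendre n).natDegree = n := by
  refine le_antisymm (natDegree_legendre_le n) (le_natDegree_of_ne_zero ?_)
  rw [coeff_legendre]; exact ne_of_gt (lc_pos n)

lemma O_diag (n : ℕ) :
    (∫ x in (-1:ℝ)..1, eval x (legendre n) * eval x (legendre n)) = 2/(2*(n:ℝ)+1) := by
  rw [integral_poly_mul, natDegree_legendre, Finset.sum_range_succ]
  have hz : ∀ m ∈ Finset.range n,
      (legendre n).coeff m * (∫ x in (-1:ℝ)..1, x^m * eval x (legendre n)) = 0 := by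
    intro m hm
    rw [show (∫ x in (-1:ℝ)..1, x^m * eval x (legendre n)) = J m n from rfl,
      Jz m n (Finset.mem_range.mp hm), mul_zero]
  rw [Finset.sum_eq_zero hz, zero_add, coeff_legendre,
    show (∫ x in (-1:ℝ)..1, x^n * eval x (legendre n)) = J n n from rfl, Jd, lc_mul_dd]

lemma legendre_ortho (a b : ℕ) :
    (∫ x in (-1:ℝ)..1, eval x (legendre a) * eval x (legendre b))
      = if a = b then 2/(2*(a:ℝ)+1) else 0 := by
  rcases lt_trichotomy a b with h|h|h
  · rw [if_neg (by omega), O_lt a b h]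
  · subst h; rw [if_pos rfl, O_diag]
  · rw [if_neg (by omega)]
    calc (∫ x in (-1:ℝ)..1, eval x (legendre a) * eval x (legendre b))
        = ∫ x in (-1:ℝ)..1, eval x (legendre b) * eval x (legendre a) := by
          congr 1; ext x; ring
      _ = 0 := O_lt b a h


/-- The basis functions `L̃_k = (L_{k−1} − L_{k+1})/√(4k+2)`, for `k ≥ 1`. -/
noncomputable def legendreTilde (k : ℕ) : Polynomial ℝ :=
  Polynomial.C (1 / Real.sqrt (4 * (k : ℝ) + 2)) * (legendre (k - 1) - legendre (k + 1))


lemma intbleO (a b : ℕ) :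
    IntervalIntegrable (fun x : ℝ => eval x (legendre a) * eval x (legendre b))
      MeasureTheory.volume (-1) 1 :=
  ((legendre a).continuous.mul (legendre b).continuous).intervalIntegrable _ _

lemma tilde_expand (i j : ℕ) :
    (∫ x in (-1:ℝ)..1, eval x (legendreTilde i) * eval x (legendreTilde j))
      = (1/Real.sqrt (4*(i:ℝ)+2)) * (1/Real.sqrt (4*(j:ℝ)+2)) *
        ((∫ x in (-1:ℝ)..1, eval x (legendre (i-1)) * eval x (legendre (j-1)))
         - (∫ x in (-1:ℝ)..1, eval x (legendre (i-1)) * eval x (legendre (j+1)))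
         - (∫ x in (-1:ℝ)..1, eval x (legendre (i+1)) * eval x (legendre (j-1)))
         + (∫ x in (-1:ℝ)..1, eval x (legendre (i+1)) * eval x (legendre (j+1)))) := by
  have hfun : ∀ x : ℝ, eval x (legendreTilde i) * eval x (legendreTilde j)
      = (1/Real.sqrt (4*(i:ℝ)+2)) * (1/Real.sqrt (4*(j:ℝ)+2)) *
          (eval x (legendre (i-1)) * eval x (legendre (j-1))
           - eval x (legendre (i-1)) * eval x (legendre (j+1))
           - eval x (legendre (i+1)) * eval x (legendre (j-1))
           + eval x (legendre (i+1)) * eval x (legendre (j+1))) := by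
    intro x
    simp only [legendreTilde, eval_mul, eval_C, eval_sub]
    ring
  rw [intervalIntegral.integral_congr (g := fun x =>
      (1/Real.sqrt (4*(i:ℝ)+2)) * (1/Real.sqrt (4*(j:ℝ)+2)) *
          (eval x (legendre (i-1)) * eval x (legendre (j-1))
           - eval x (legendre (i-1)) * eval x (legendre (j+1))
           - eval x (legendre (i+1)) * eval x (legendre (j-1))
           + eval x (legendre (i+1)) * eval x (legendre (j+1))))
    (fun x _ => hfun x)]
  rw [intervalIntegral.integral_const_mul]
  congr 1
  rw [intervalIntegral.integral_add (((intbleO _ _).sub (intbleO _ _)).sub (intbleO _ _)) (intbleO _ _),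
    intervalIntegral.integral_sub ((intbleO _ _).sub (intbleO _ _)) (intbleO _ _),
    intervalIntegral.integral_sub (intbleO _ _) (intbleO _ _)]

lemma sqrt_aux (j A B S : ℝ) (hA : 0 < A) (hB : 0 < B) (hS : 0 < S)
    (h23 : 2*j+3 ≠ 0) (hs' : A * B = 2 * S) :
    1 / A * (1 / B) * -(2/(2*j+3)) = -1 / ((2*j+3) * S) := by
  field_simp
  linear_combination hs'


/-- Explicit form of the mass matrix of the basis `(L̃_k)`. -/
theorem legendreTilde_mass_matrix :
    ∀ i j : ℕ, 1 ≤ i → 1 ≤ j →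
      (∫ x in (-1 : ℝ)..1, (legendreTilde i).eval x * (legendreTilde j).eval x)
        = if i = j then 2 / ((2 * (i : ℝ) - 1) * (2 * (i : ℝ) + 3))
          else if i = j + 2 ∨ j = i + 2 then
            -1 / ((2 * ((min i j : ℕ) : ℝ) + 3) *
              Real.sqrt ((2 * ((min i j : ℕ) : ℝ) + 1) * (2 * ((min i j : ℕ) : ℝ) + 5)))
          else 0 := by
  intro i j hi hj
  rw [tilde_expand i j]
  simp only [legendre_ortho]
  by_cases hij : i = j
  · subst hij
    rw [if_pos rfl]
    have e1 : i - 1 = i - 1 := rfl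
    rw [if_pos rfl, if_pos rfl, if_neg (by omega : ¬ (i-1 = i+1)), if_neg (by omega : ¬ (i+1 = i-1))]
    have hc : (1/Real.sqrt (4*(i:ℝ)+2)) * (1/Real.sqrt (4*(i:ℝ)+2)) = 1/(4*(i:ℝ)+2) := by
      rw [div_mul_div_comm, one_mul, Real.mul_self_sqrt (by positivity)]
    rw [hc]
    have hcast : ((i - 1 : ℕ) : ℝ) = (i:ℝ) - 1 := by
      push_cast [Nat.cast_sub hi]; ring
    rw [hcast]
    push_cast
    have h1 : 2*((i:ℝ)-1)+1 = 2*(i:ℝ)-1 := by ring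
    rw [h1]
    have hi1 : (1:ℝ) ≤ (i:ℝ) := by exact_mod_cast hi
    have h2 : 2*(i:ℝ)-1 ≠ 0 := by nlinarith
    have h3 : 2*((i:ℝ)+1)+1 ≠ 0 := by positivity
    have h4 : 4*(i:ℝ)+2 ≠ 0 := by positivity
    have h2' : (i:ℝ)*2-1 ≠ 0 := by linarith
    field_simp
    ring
  · rw [if_neg hij]
    by_cases h2 : i = j + 2 ∨ j = i + 2
    · rw [if_pos h2]
      have hs : ∀ k : ℕ, Real.sqrt (4*(k:ℝ)+2) * Real.sqrt (4*(k:ℝ)+10)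
          = 2 * Real.sqrt ((2*(k:ℝ)+1)*(2*(k:ℝ)+5)) := by
        intro k
        rw [← Real.sqrt_mul (by positivity),
          show (4*(k:ℝ)+2)*(4*(k:ℝ)+10) = 2^2 * ((2*(k:ℝ)+1)*(2*(k:ℝ)+5)) by ring,
          Real.sqrt_mul (by positivity), Real.sqrt_sq (by norm_num)]
      rcases h2 with h2 | h2
      · -- i = j + 2, min = j
        subst h2
        rw [if_neg (show ¬ (j+2-1 = j-1) by omega),
          if_pos (show j+2-1 = j+1 by omega),
          if_neg (show ¬ (j+2+1 = j-1) by omega),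
          if_neg (show ¬ (j+2+1 = j+1) by omega)]
        have hmin : min (j+2) j = j := by omega
        rw [hmin]
        have hcast : ((j + 2 - 1 : ℕ) : ℝ) = (j:ℝ) + 1 := by norm_num
        rw [hcast]
        push_cast
        have hS : (0:ℝ) < Real.sqrt ((2*(j:ℝ)+1)*(2*(j:ℝ)+5)) :=
          Real.sqrt_pos.mpr (by positivity)
        have hA : (0:ℝ) < Real.sqrt (4*((j:ℝ)+2)+2) := Real.sqrt_pos.mpr (by positivity)
        have hB : (0:ℝ) < Real.sqrt (4*(j:ℝ)+2) := Real.sqrt_pos.mpr (by positivity)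
        have h23 : 2*(j:ℝ)+3 ≠ 0 := by positivity
        have hs' : Real.sqrt (4*((j:ℝ)+2)+2) * Real.sqrt (4*(j:ℝ)+2)
            = 2 * Real.sqrt ((2*(j:ℝ)+1)*(2*(j:ℝ)+5)) := by
          rw [show 4*((j:ℝ)+2)+2 = 4*(j:ℝ)+10 by ring, mul_comm]
          exact hs j
        rw [show (0 - 2/(2*((j:ℝ)+1)+1) - 0 + 0 : ℝ) = -(2/(2*(j:ℝ)+3)) by ring]
        exact sqrt_aux _ _ _ _ hA hB hS h23 hs'
      · -- j = i + 2, min = i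
        subst h2
        rw [if_neg (show ¬ (i-1 = i+2-1) by omega),
          if_neg (show ¬ (i-1 = i+2+1) by omega),
          if_pos (show i+1 = i+2-1 by omega),
          if_neg (show ¬ (i+1 = i+2+1) by omega)]
        have hmin : min i (i+2) = i := by omega
        rw [hmin]
        push_cast
        have hS : (0:ℝ) < Real.sqrt ((2*(i:ℝ)+1)*(2*(i:ℝ)+5)) :=
          Real.sqrt_pos.mpr (by positivity)
        have h23 : 2*(i:ℝ)+3 ≠ 0 := by positivity
        have hs' : Real.sqrt (4*(i:ℝ)+2) * Real.sqrt (4*((i:ℝ)+2)+2)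
            = 2 * Real.sqrt ((2*(i:ℝ)+1)*(2*(i:ℝ)+5)) := by
          rw [show 4*((i:ℝ)+2)+2 = 4*(i:ℝ)+10 by ring]
          exact hs i
        rw [show (0 - 0 - 2/(2*((i:ℝ)+1)+1) + 0 : ℝ) = -(2/(2*(i:ℝ)+3)) by ring]
        exact sqrt_aux _ _ _ _ (Real.sqrt_pos.mpr (by positivity))
          (Real.sqrt_pos.mpr (by positivity)) hS h23 hs'
    · rw [if_neg h2]
      rw [if_neg (by omega), if_neg (by omega), if_neg (by omega), if_neg (by omega)]
      ring
end

section
/- The coupling matrix of the mixed Legendre–Galerkin method has the explicit form: for all i, j ≥ 1, ∫_{-1}^{1} L̃_j(x)·L_{i−1}(x) dx equals √2/((2i−1)·√(2i+1)) if i = j, equals −√2/((2j+3)·√(2j+1)) if i = j+2, and equals 0 otherwise. -/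
open Polynomial

open intervalIntegral

noncomputable def tgt (m n : ℕ) : ℝ :=
  if m < n then 0 else if ¬ 2 ∣ (m - n) then 0
  else 2^(n+1) * (m.factorial : ℝ) * ((n + (m-n)/2).factorial : ℝ) /
       ((((m-n)/2).factorial : ℝ) * ((m+n+1).factorial : ℝ))

lemma tgt_lt {m n : ℕ} (h : m < n) : tgt m n = 0 := by rw [tgt, if_pos h]

lemma tgt_odd {m n : ℕ} (h2 : ¬ 2 ∣ (m - n)) : tgt m n = 0 := by
  rw [tgt]
  rcases lt_or_ge m n with h | h
  · rw [if_pos h]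
  · rw [if_neg (by omega), if_pos h2]

lemma tgt_eval {m n : ℕ} (j : ℕ) (h : m = n + 2*j) : tgt m n =
    2^(n+1) * ((m.factorial : ℝ)) * (((n+j).factorial : ℝ)) /
      (((j.factorial : ℝ)) * (((m+n+1).factorial : ℝ))) := by
  subst h
  have h1 : ¬ (n + 2*j < n) := by omega
  have h2 : n + 2*j - n = 2*j := by omega
  rw [tgt, if_neg h1, h2]
  have h3 : ¬ ¬ (2 ∣ 2*j) := by simp
  rw [if_neg h3]
  have h4 : 2*j/2 = j := by omega
  rw [h4]

lemma fac_pos (n : ℕ) : (0:ℝ) < (n.factorial : ℝ) := by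
  exact_mod_cast Nat.factorial_pos n


lemma integral_pow_sym (n : ℕ) : (∫ x in (-1:ℝ)..1, x^n) = if 2 ∣ n then 2/((n:ℝ)+1) else 0 := by
  rw [integral_pow]
  rcases Nat.even_or_odd n with ⟨t, rfl⟩ | ⟨t, rfl⟩
  · rw [if_pos (by omega)]
    have h1 : Odd (t+t+1) := ⟨t, by ring⟩
    rw [h1.neg_one_pow, one_pow]
    push_cast
    ring
  · rw [if_neg (by omega)]
    have h1 : Even (2*t+1+1) := ⟨t+1, by ring⟩
    rw [h1.neg_one_pow, one_pow]
    simp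

-- moment function
noncomputable def Mo (m n : ℕ) : ℝ := ∫ x in (-1:ℝ)..1, x^m * (legendre n).eval x

lemma intble (m n : ℕ) :
    IntervalIntegrable (fun x : ℝ => x^m * (legendre n).eval x) MeasureTheory.volume (-1) 1 :=
  ((continuous_pow m).mul (legendre n).continuous).intervalIntegrable _ _

lemma Mo_zero (m : ℕ) : Mo m 0 = tgt m 0 := by
  have h0 : Mo m 0 = ∫ x in (-1:ℝ)..1, x^m := by
    unfold Mo; congr 1; funext x; simp [legendre]
  rw [h0, integral_pow_sym]
  rcases Nat.even_or_odd m with ⟨t, rfl⟩ | ⟨t, rfl⟩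
  · rw [if_pos (by omega), tgt_eval t (show t+t = 0 + 2*t by omega)]
    have i1 : t + t + 0 + 1 = (t+t) + 1 := by omega
    have i2 : (0:ℕ) + t = t := by omega
    rw [i1, i2, Nat.factorial_succ (t+t)]
    have q1 := fac_pos (t+t)
    have q2 := fac_pos t
    push_cast
    field_simp
  · rw [if_neg (by omega), tgt_odd (show ¬ 2 ∣ (2*t+1-0) by omega)]

lemma Mo_one (m : ℕ) : Mo m 1 = tgt m 1 := by
  have h0 : Mo m 1 = ∫ x in (-1:ℝ)..1, x^(m+1) := by
    unfold Mo; congr 1; funext x; simp [legendre, pow_succ]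
  rw [h0, integral_pow_sym]
  rcases Nat.even_or_odd m with ⟨t, rfl⟩ | ⟨t, rfl⟩
  · rw [if_neg (by omega)]
    have hz : tgt (t+t) 1 = 0 := by
      rcases Nat.eq_zero_or_pos t with rfl | hm
      · exact tgt_lt (by omega)
      · exact tgt_odd (by omega)
    rw [hz]
  · rw [if_pos (by omega), tgt_eval t (show 2*t+1 = 1 + 2*t by omega)]
    have i1 : 2*t+1+1+1 = ((2*t+1) + 1) + 1 := by omega
    have i2 : (1:ℕ) + t = t + 1 := by omega
    rw [i1, i2, Nat.factorial_succ ((2*t+1)+1), Nat.factorial_succ (2*t+1),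
        Nat.factorial_succ t]
    have q1 := fac_pos (2*t+1)
    have q2 := fac_pos t
    push_cast
    field_simp
    ring

lemma tgt_rec (k m : ℕ) :
    tgt m (k+2) = (2*(k:ℝ)+3)/((k:ℝ)+2) * tgt (m+1) (k+1) - ((k:ℝ)+1)/((k:ℝ)+2) * tgt m k := by
  have hk2 : ((k:ℝ)+2) ≠ 0 := by positivity
  rcases lt_trichotomy m k with h | rfl | h
  · rw [tgt_lt h, tgt_lt (by omega), tgt_lt (by omega)]; ring
  · rw [tgt_lt (show m < m+2 by omega), tgt_eval 0 (show m+1 = (m+1) + 2*0 by ring),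
        tgt_eval 0 (show m = m + 2*0 by ring)]
    have p1 : m + 1 + (m+1) + 1 = ((m+m+1) + 1) + 1 := by omega
    rw [Nat.add_zero, Nat.add_zero, p1, Nat.factorial_succ ((m+m+1)+1), Nat.factorial_succ (m+m+1),
        Nat.factorial_succ m]
    push_cast [Nat.factorial]
    have q1 := fac_pos m
    have q2 := fac_pos (m+m+1)
    field_simp
    ring
  · by_cases hd : 2 ∣ (m - k)
    · obtain ⟨j', rfl⟩ : ∃ j', m = k + 2 + 2*j' := ⟨(m-k)/2 - 1, by omega⟩
      rw [tgt_eval j' (show k+2+2*j' = (k+2) + 2*j' by ring),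
          tgt_eval (j'+1) (show k+2+2*j'+1 = (k+1) + 2*(j'+1) by ring),
          tgt_eval (j'+1) (show k+2+2*j' = k + 2*(j'+1) by ring)]
      have i1 : k + 2 + j' = (k + j' + 1) + 1 := by omega
      have i2 : k + 2 + 2*j' + (k+2) + 1 = ((2*k+2*j'+3) + 1) + 1 := by omega
      have i3 : k + 1 + (j'+1) = (k + j' + 1) + 1 := by omega
      have i4 : k + 2 + 2*j' + 1 + (k+1) + 1 = ((2*k+2*j'+3) + 1) + 1 := by omega
      have i5 : k + (j'+1) = k + j' + 1 := by omega
      have i6 : k + 2 + 2*j' + k + 1 = 2*k+2*j'+3 := by omega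
      rw [i1, i2, i3, i4, i5, i6, Nat.factorial_succ (k+j'+1),
          Nat.factorial_succ ((2*k+2*j'+3)+1), Nat.factorial_succ (2*k+2*j'+3),
          Nat.factorial_succ (k+2+2*j'), Nat.factorial_succ j']
      push_cast
      have q1 := fac_pos (k+2+2*j')
      have q2 := fac_pos (k+j'+1)
      have q3 := fac_pos j'
      have q4 := fac_pos (2*k+2*j'+3)
      field_simp
      ring
    · have z1 : tgt m (k+2) = 0 := by
        rcases lt_or_ge m (k+2) with hh | hh
        · exact tgt_lt hh
        · exact tgt_odd (by omega)
      rw [z1, tgt_odd hd, tgt_odd (show ¬ 2 ∣ (m+1-(k+1)) by omega)]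
      ring

lemma Mo_step (k : ℕ) (ih1 : ∀ m, Mo m k = tgt m k) (ih2 : ∀ m, Mo m (k+1) = tgt m (k+1)) :
    ∀ m, Mo m (k+2) = tgt m (k+2) := by
  intro m
  have key : ∀ x : ℝ, x^m * (legendre (k+2)).eval x
      = (2*(k:ℝ)+3)/((k:ℝ)+2) * (x^(m+1) * (legendre (k+1)).eval x)
        - ((k:ℝ)+1)/((k:ℝ)+2) * (x^m * (legendre k).eval x) := by
    intro x; rw [legendre]; simp; ring
  have : Mo m (k+2) = (2*(k:ℝ)+3)/((k:ℝ)+2) * Mo (m+1) (k+1) - ((k:ℝ)+1)/((k:ℝ)+2) * Mo m k := by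
    unfold Mo
    rw [← integral_const_mul, ← integral_const_mul, ← integral_sub
        (((intble (m+1) (k+1)).const_mul _)) ((intble m k).const_mul _)]
    congr 1; funext x; exact key x
  rw [this, ih1, ih2, tgt_rec]

lemma Mo_eq : ∀ n m, Mo m n = tgt m n := by
  have key : ∀ n, (∀ m, Mo m n = tgt m n) ∧ (∀ m, Mo m (n+1) = tgt m (n+1)) := by
    intro n
    induction n with
    | zero => exact ⟨Mo_zero, Mo_one⟩
    | succ k ih => exact ⟨ih.2, Mo_step k ih.1 ih.2⟩
  exact fun n => (key n).1

lemma legendre_deg : ∀ n, (legendre n).natDegree ≤ n := by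
  have key : ∀ n, (legendre n).natDegree ≤ n ∧ (legendre (n+1)).natDegree ≤ n+1 := by
    intro n
    induction n with
    | zero =>
      constructor
      · simp [legendre]
      · simp [legendre]
    | succ k ih =>
      refine ⟨ih.2, ?_⟩
      rw [legendre]
      apply le_trans (natDegree_sub_le _ _)
      apply max_le
      · apply le_trans (natDegree_C_mul_le _ _)
        apply le_trans (natDegree_mul_le)
        have := ih.2
        simpa using by omega
      · apply le_trans (natDegree_C_mul_le _ _)
        omega
  exact fun n => (key n).1

lemma legendre_coeff : ∀ n, (legendre n).coeff n
    = ((2*n).factorial : ℝ) / (2^n * ((n.factorial : ℝ))^2) := by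
  have key : ∀ n, ((legendre n).coeff n = ((2*n).factorial : ℝ) / (2^n * ((n.factorial : ℝ))^2)) ∧
      ((legendre (n+1)).coeff (n+1) = ((2*(n+1)).factorial : ℝ) / (2^(n+1) * (((n+1).factorial : ℝ))^2)) := by
    intro n
    induction n with
    | zero =>
      constructor
      · simp [legendre, Nat.factorial]
      · simp [legendre, Nat.factorial]
    | succ k ih =>
      refine ⟨ih.2, ?_⟩
      rw [legendre]
      rw [coeff_sub, coeff_C_mul, coeff_C_mul, coeff_X_mul]
      have hz : (legendre k).coeff (k+2) = 0 :=
        coeff_eq_zero_of_natDegree_lt (by have := legendre_deg k; omega)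
      rw [hz, ih.2]
      have i1 : 2*(k+1+1) = ((2*(k+1)) + 1) + 1 := by omega
      rw [i1, Nat.factorial_succ ((2*(k+1))+1), Nat.factorial_succ (2*(k+1)),
          Nat.factorial_succ (k+1)]
      have q1 := fac_pos (k+1)
      have q2 := fac_pos (2*(k+1))
      have hk2 : ((k:ℝ)+2) ≠ 0 := by positivity
      push_cast
      field_simp
      ring
  exact fun n => (key n).1

noncomputable def II (m n : ℕ) : ℝ := ∫ x in (-1:ℝ)..1, (legendre m).eval x * (legendre n).eval x

lemma II_eq_sum (m n : ℕ) :
    II m n = ∑ i ∈ Finset.range (m+1), (legendre m).coeff i * tgt i n := by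
  unfold II
  have h1 : ∀ x : ℝ, (legendre m).eval x * (legendre n).eval x
      = ∑ i ∈ Finset.range (m+1), (legendre m).coeff i * (x^i * (legendre n).eval x) := by
    intro x
    rw [eval_eq_sum_range' (show (legendre m).natDegree < m+1 by have := legendre_deg m; omega),
        Finset.sum_mul]
    exact Finset.sum_congr rfl fun i _ => by ring
  rw [show (∫ x in (-1:ℝ)..1, (legendre m).eval x * (legendre n).eval x)
      = ∫ x in (-1:ℝ)..1, ∑ i ∈ Finset.range (m+1), (legendre m).coeff i * (x^i * (legendre n).eval x)
      from by congr 1; funext x; exact h1 x]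
  rw [intervalIntegral.integral_finset_sum (fun i _ => ((intble i n).const_mul _))]
  refine Finset.sum_congr rfl fun i _ => ?_
  rw [integral_const_mul]
  congr 1
  exact Mo_eq n i

lemma II_lt {m n : ℕ} (h : m < n) : II m n = 0 := by
  rw [II_eq_sum]
  apply Finset.sum_eq_zero
  intro i hi
  rw [tgt_lt (by simp at hi; omega), mul_zero]

lemma II_diag (n : ℕ) : II n n = 2/(2*(n:ℝ)+1) := by
  rw [II_eq_sum]
  rw [Finset.sum_eq_single n
      (fun i hi hne => by rw [tgt_lt (by simp at hi; omega), mul_zero])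
      (fun h => absurd (Finset.self_mem_range_succ n) h)]
  rw [legendre_coeff, tgt_eval 0 (show n = n + 2*0 by ring)]
  have i1 : n + n + 1 = (2*n) + 1 := by omega
  rw [Nat.add_zero, i1, Nat.factorial_succ (2*n)]
  have q1 := fac_pos n
  have q2 := fac_pos (2*n)
  push_cast [Nat.factorial_zero]
  field_simp
  ring

lemma II_eq (m n : ℕ) : II m n = if m = n then 2/(2*(n:ℝ)+1) else 0 := by
  rcases lt_trichotomy m n with h | rfl | h
  · rw [if_neg (by omega), II_lt h]
  · rw [if_pos rfl, II_diag]
  · rw [if_neg (by omega)]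
    have : II m n = II n m := by unfold II; congr 1; funext x; ring
    rw [this, II_lt h]

/-- Explicit form of the coupling matrix of the mixed Legendre–Galerkin method. -/
theorem mixed_coupling_matrix :
    ∀ i j : ℕ, 1 ≤ i → 1 ≤ j →
      (∫ x in (-1 : ℝ)..1, (legendreTilde j).eval x * (legendre (i - 1)).eval x)
        = if i = j then Real.sqrt 2 / ((2 * (i : ℝ) - 1) * Real.sqrt (2 * (i : ℝ) + 1))
          else if i = j + 2 then
            -Real.sqrt 2 / ((2 * (j : ℝ) + 3) * Real.sqrt (2 * (j : ℝ) + 1))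
          else 0 := by
  intro i j hi hj
  obtain ⟨i', rfl⟩ : ∃ i', i = i' + 1 := ⟨i - 1, by omega⟩
  obtain ⟨j', rfl⟩ : ∃ j', j = j' + 1 := ⟨j - 1, by omega⟩
  have hred : (∫ x in (-1 : ℝ)..1, (legendreTilde (j'+1)).eval x * (legendre (i'+1 - 1)).eval x)
      = (1 / Real.sqrt (4 * ((j':ℝ)+1) + 2)) * (II j' i' - II (j'+2) i') := by
    unfold legendreTilde II
    rw [← integral_sub (show IntervalIntegrable (fun x => (legendre j').eval x * (legendre i').eval x) MeasureTheory.volume (-1) 1 from ((legendre j').continuous.mul (legendre i').continuous).intervalIntegrable _ _)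
        (show IntervalIntegrable (fun x => (legendre (j'+2)).eval x * (legendre i').eval x) MeasureTheory.volume (-1) 1 from ((legendre (j'+2)).continuous.mul (legendre i').continuous).intervalIntegrable _ _),
        ← integral_const_mul]
    congr 1; funext x
    have h0 : j' + 1 - 1 = j' := by omega
    rw [h0]
    simp only [eval_mul, eval_C, eval_sub]
    push_cast
    ring
  rw [hred]
  have hs : Real.sqrt (4 * ((j':ℝ)+1) + 2) = Real.sqrt 2 * Real.sqrt (2*(j':ℝ)+3) := by
    rw [← Real.sqrt_mul (by norm_num)]
    congr 1; ring
  have h2 : Real.sqrt 2 > 0 := by positivity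
  have h3 : Real.sqrt (2*(j':ℝ)+3) > 0 := by positivity
  have hsq2 : Real.sqrt 2 * Real.sqrt 2 = 2 := Real.mul_self_sqrt (by norm_num)
  by_cases hij : i' = j'
  · subst hij
    have e1 : II i' i' = 2/(2*(i':ℝ)+1) := by rw [II_eq, if_pos rfl]
    have e2 : II (i'+2) i' = 0 := by rw [II_eq, if_neg (by omega)]
    rw [e1, e2, if_pos rfl, hs]
    push_cast
    have h4 : (2*(i':ℝ)+1) > 0 := by positivity
    have hc : 2*((i':ℝ)+1) - 1 = 2*(i':ℝ)+1 := by ring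
    have hc2 : 2*((i':ℝ)+1) + 1 = 2*(i':ℝ)+3 := by ring
    rw [hc, hc2, sub_zero]
    have n1 : Real.sqrt 2 ≠ 0 := ne_of_gt h2
    have n2 : Real.sqrt (2*(i':ℝ)+3) ≠ 0 := ne_of_gt h3
    have n3 : (2*(i':ℝ)+1) ≠ 0 := ne_of_gt h4
    field_simp
    first
      | linear_combination ((2*(i':ℝ)+1) * Real.sqrt (2*(i':ℝ)+3)) * hsq2
      | linear_combination (-(2*(i':ℝ)+1) * Real.sqrt (2*(i':ℝ)+3)) * hsq2
      | nlinarith [hsq2, h3, h4, h2]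
  · by_cases hij2 : i' = j' + 2
    · subst hij2
      have e1 : II j' (j'+2) = 0 := by rw [II_eq, if_neg (by omega)]
      have e2 : II (j'+2) (j'+2) = 2/(2*((j':ℝ)+2)+1) := by
        rw [II_eq, if_pos rfl]; push_cast; ring_nf
      rw [e1, e2, if_neg (by omega), if_pos (by omega), hs]
      push_cast
      have h4 : (2*(j':ℝ)+5) > 0 := by positivity
      have hc : 2*((j':ℝ)+2)+1 = 2*(j':ℝ)+5 := by ring
      have hc2 : 2*((j':ℝ)+1)+3 = 2*(j':ℝ)+5 := by ring
      have hc3 : 2*((j':ℝ)+1)+1 = 2*(j':ℝ)+3 := by ring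
      rw [hc, hc2, hc3, zero_sub]
      have n1 : Real.sqrt 2 ≠ 0 := ne_of_gt h2
      have n2 : Real.sqrt (2*(j':ℝ)+3) ≠ 0 := ne_of_gt h3
      have n3 : (2*(j':ℝ)+5) ≠ 0 := ne_of_gt h4
      field_simp
      first
        | linear_combination ((2*(j':ℝ)+5) * Real.sqrt (2*(j':ℝ)+3)) * hsq2
        | linear_combination (-(2*(j':ℝ)+5) * Real.sqrt (2*(j':ℝ)+3)) * hsq2
        | nlinarith [hsq2, h3, h4, h2]
    · have e1 : II j' i' = 0 := by rw [II_eq, if_neg (by omega)]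
      have e2 : II (j'+2) i' = 0 := by rw [II_eq, if_neg (by omega)]
      rw [e1, e2, if_neg (by omega), if_neg (by omega)]
      ring
end

section
/- Uniform coercivity of the symmetric Nitsche bilinear form: for every γ > 1/2 there exists C > 0 such that for every integer N ≥ 1 and every real polynomial ψ of degree at most N with ψ(−1) = 0, one has ∫_{-1}^{1} ψ'(x)² dx − 2·ψ'(1)·ψ(1) + γ·N²·ψ(1)² ≥ C·( ∫_{-1}^{1} ψ'(x)² dx + N²·ψ(1)² ). The constant C depends only on γ, not on N. -/
open Polynomial

section NitscheAux

open intervalIntegral MeasureTheory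

noncomputable def Wp (n : ℕ) : Polynomial ℝ := ((X : Polynomial ℝ)^2 - 1)^n
noncomputable def Rp (n : ℕ) : Polynomial ℝ := derivative^[n] (Wp n)
noncomputable def Jv (n : ℕ) : ℝ := ∫ x in (-1:ℝ)..1, (1 - x^2)^n


lemma pint (p : Polynomial ℝ) : IntervalIntegrable (fun x => p.eval x) MeasureTheory.volume (-1:ℝ) 1 :=
  p.continuous.intervalIntegrable _ _

lemma poly_ibp (u v : Polynomial ℝ) :
    ∫ x in (-1:ℝ)..1, u.eval x * (derivative v).eval x
      = u.eval 1 * v.eval 1 - u.eval (-1) * v.eval (-1)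
        - ∫ x in (-1:ℝ)..1, (derivative u).eval x * v.eval x := by
  exact integral_mul_deriv_eq_deriv_mul (fun x _ => u.hasDerivAt x)
    (fun x _ => v.hasDerivAt x) (pint _) (pint _)

lemma factor (n : ℕ) : ∀ j, j ≤ n → ∃ p : Polynomial ℝ,
    derivative^[j] (((X : Polynomial ℝ)^2 - 1)^n) = ((X:Polynomial ℝ)^2 - 1)^(n-j) * p
      ∧ p.eval 1 = 2^j * (n.descFactorial j) := by
  intro j
  induction j with
  | zero => intro _; exact ⟨1, by simp⟩
  | succ j ih =>
    intro hj
    obtain ⟨p, hp, hp1⟩ := ih (Nat.le_of_succ_le hj)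
    have hm : n - j = (n - (j+1)) + 1 := by omega
    refine ⟨Polynomial.C (2*((n:ℝ) - j)) * X * p + ((X:Polynomial ℝ)^2 - 1) * derivative p,
      ?_, ?_⟩
    · rw [Function.iterate_succ_apply', hp, hm]
      set m := n - (j+1) with hmdef
      rw [derivative_mul, derivative_pow]
      have hd : derivative (((X:Polynomial ℝ))^2 - 1) = Polynomial.C 2 * X := by
        simp [derivative_pow]
      rw [hd]
      have hc : (Polynomial.C ((m + 1 : ℕ) : ℝ)) = Polynomial.C ((n:ℝ) - j) := by
        congr 1
        push_cast [hmdef, Nat.cast_sub (by omega : j + 1 ≤ n)]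
        ring
      rw [hc, Nat.add_sub_cancel]
      rw [C_mul]
      norm_num
      ring
    · simp only [eval_add, eval_mul, eval_C, eval_X, eval_pow, eval_sub, eval_one]
      norm_num
      rw [hp1]
      push_cast [Nat.cast_sub (by omega : j ≤ n), Nat.descFactorial_succ]
      ring

lemma shift : ∀ (n : ℕ) (w q : Polynomial ℝ),
    (∀ j < n, (derivative^[j] w).eval 1 = 0 ∧ (derivative^[j] w).eval (-1) = 0) →
    ∫ x in (-1:ℝ)..1, q.eval x * (derivative^[n] w).eval x
      = (-1:ℝ)^n * ∫ x in (-1:ℝ)..1, (derivative^[n] q).eval x * w.eval x := by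
  intro n
  induction n with
  | zero => intro w q _; simp
  | succ n ih =>
    intro w q hb
    have h1 : derivative^[n+1] w = derivative^[n] (derivative w) :=
      Function.iterate_succ_apply _ _ _
    rw [h1, ih (derivative w) q (fun j hj => by
      rw [← Function.iterate_succ_apply]
      exact hb (j+1) (by omega))]
    rw [poly_ibp (derivative^[n] q) w]
    have e1 : w.eval 1 = 0 := (hb 0 (by omega)).1
    have e2 : w.eval (-1) = 0 := (hb 0 (by omega)).2
    rw [e1, e2, ← Function.iterate_succ_apply' derivative n q]
    ring

lemma Wp_bd (n : ℕ) : ∀ j < n, (derivative^[j] (Wp n)).eval 1 = 0 ∧ (derivative^[j] (Wp n)).eval (-1) = 0 := by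
  intro j hj
  obtain ⟨p, hp, -⟩ := factor n j (le_of_lt hj)
  have hnj : n - j ≠ 0 := by omega
  rw [Wp, hp]
  constructor <;> simp [zero_pow hnj]

lemma Rp_eval_one (n : ℕ) : (Rp n).eval 1 = 2^n * n.factorial := by
  obtain ⟨p, hp, hp1⟩ := factor n n le_rfl
  rw [Rp, Wp, hp]
  simp [hp1, Nat.descFactorial_self]

lemma Wp_monic (n : ℕ) : (Wp n).Monic := by
  have : ((X : Polynomial ℝ)^2 - 1) = X^2 - Polynomial.C 1 := by norm_num
  rw [Wp, this]
  exact (monic_X_pow_sub_C (1:ℝ) (by norm_num)).pow n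

lemma Wp_natDegree (n : ℕ) : (Wp n).natDegree = 2*n := by
  have : ((X : Polynomial ℝ)^2 - 1) = X^2 - Polynomial.C 1 := by norm_num
  rw [Wp, this, natDegree_pow, natDegree_X_pow_sub_C]
  ring

lemma iter_deriv_Wp (n : ℕ) : derivative^[2*n] (Wp n) = Polynomial.C (((2*n).factorial : ℝ)) := by
  have hdeg : (derivative^[2*n] (Wp n)).natDegree ≤ 0 := by
    have := natDegree_iterate_derivative (Wp n) (2*n)
    rw [Wp_natDegree] at this
    omega
  rw [Polynomial.eq_C_of_natDegree_le_zero hdeg]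
  congr 1
  rw [Polynomial.coeff_iterate_derivative]
  have h0 : (Wp n).coeff (0 + 2*n) = 1 := by
    simpa [← Wp_natDegree n] using (Wp_monic n).coeff_natDegree
  rw [h0]
  simp [Nat.descFactorial_self]

lemma Rp_coeff (n : ℕ) : (Rp n).coeff n = ((2*n).descFactorial n : ℝ) := by
  rw [Rp, Polynomial.coeff_iterate_derivative]
  have h1 : n + n = 2*n := by ring
  rw [h1, ← Wp_natDegree n]
  rw [(Wp_monic n).coeff_natDegree]
  simp [Wp_natDegree]

lemma Rp_degree (n : ℕ) : (Rp n).degree ≤ (n : WithBot ℕ) := by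
  refine le_trans (degree_le_natDegree) ?_
  have := natDegree_iterate_derivative (Wp n) n
  rw [Wp_natDegree] at this
  exact_mod_cast le_trans (Nat.cast_le.mpr this) (by norm_num; omega)

lemma cint (n : ℕ) : IntervalIntegrable (fun x : ℝ => (1 - x^2)^n) MeasureTheory.volume (-1:ℝ) 1 :=
  (Continuous.pow (by continuity) n).intervalIntegrable _ _

lemma Jv_zero : Jv 0 = 2 := by simp [Jv]; norm_num

lemma Jv_rec (n : ℕ) : (2*(n:ℝ)+3) * Jv (n+1) = (2*(n:ℝ)+2) * Jv n := by
  have key : ∫ x in (-1:ℝ)..1,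
      ((2*(n:ℝ)+3) * (1 - x^2)^(n+1) - (2*(n:ℝ)+2) * (1 - x^2)^n)
      = (fun x : ℝ => x * (1 - x^2)^(n+1)) 1 - (fun x : ℝ => x * (1 - x^2)^(n+1)) (-1) := by
    apply integral_eq_sub_of_hasDerivAt (f := fun x : ℝ => x * (1 - x^2)^(n+1))
      (f' := fun x : ℝ => (2*(n:ℝ)+3) * (1 - x^2)^(n+1) - (2*(n:ℝ)+2) * (1 - x^2)^n)
    · intro x _
      have h1 : HasDerivAt (fun x : ℝ => 1 - x^2) (-(2*x)) x := by
        simpa using ((hasDerivAt_pow 2 x).const_sub 1)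
      have h2 : HasDerivAt (fun x : ℝ => (1 - x^2)^(n+1))
          (((n:ℝ)+1) * (1 - x^2)^n * (-(2*x))) x := by
        simpa using h1.fun_pow (n+1)
      have h3 := (hasDerivAt_id x).fun_mul h2
      refine h3.congr_deriv ?_
      simp only [id]
      rw [pow_succ]
      ring
    · apply IntervalIntegrable.sub
      · exact (IntervalIntegrable.const_mul (cint (n+1)) _)
      · exact (IntervalIntegrable.const_mul (cint n) _)
  have hsplit : ∫ x in (-1:ℝ)..1,
      ((2*(n:ℝ)+3) * (1 - x^2)^(n+1) - (2*(n:ℝ)+2) * (1 - x^2)^n)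
      = (2*(n:ℝ)+3) * Jv (n+1) - (2*(n:ℝ)+2) * Jv n := by
    rw [integral_sub ((cint (n+1)).const_mul _) ((cint n).const_mul _),
      intervalIntegral.integral_const_mul, intervalIntegral.integral_const_mul]
    rfl
  rw [hsplit] at key
  simp at key
  linarith [key]

lemma Jv_pos (n : ℕ) : 0 < Jv n := by
  induction n with
  | zero => rw [Jv_zero]; norm_num
  | succ n ih =>
    have h := Jv_rec n
    nlinarith [ih, Nat.cast_nonneg (α := ℝ) n]

lemma Jv_val (n : ℕ) : (2*(n:ℝ)+1) * (2*n).factorial * Jv n = 2 * 4^n * ((n.factorial : ℝ))^2 := by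
  induction n with
  | zero => simp [Jv_zero]
  | succ n ih =>
    have hrec := Jv_rec n
    have hf : (((2*(n+1)).factorial : ℕ) : ℝ) = (2*(n:ℝ)+2) * (2*(n:ℝ)+1) * (2*n).factorial := by
      have : 2*(n+1) = (2*n+1)+1 := by ring
      rw [this]
      push_cast [Nat.factorial_succ]
      ring
    have hf2 : (((n+1).factorial : ℕ) : ℝ) = ((n:ℝ)+1) * n.factorial := by
      push_cast [Nat.factorial_succ]; ring
    push_cast
    rw [hf, hf2]
    push_cast at hrec ih ⊢
    linear_combination ((2*(n:ℝ)+2)*(2*(n:ℝ)+1)*(((2*n).factorial : ℕ) : ℝ)) * hrec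
      + ((2*(n:ℝ)+2)^2) * ih

lemma ortho {n : ℕ} {q : Polynomial ℝ} (h : q.degree < (n : WithBot ℕ)) :
    ∫ x in (-1:ℝ)..1, q.eval x * (Rp n).eval x = 0 := by
  rw [Rp, shift n (Wp n) q (Wp_bd n)]
  have hq : derivative^[n] q = 0 := by
    rcases eq_or_ne q 0 with rfl | hq0
    · simp
    · exact iterate_derivative_eq_zero ((natDegree_lt_iff_degree_lt hq0).mpr h)
  rw [hq]
  simp

lemma Rnormsq (n : ℕ) : (∫ x in (-1:ℝ)..1, ((Rp n).eval x)^2) = (2*n).factorial * Jv n := by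
  have h1 : (∫ x in (-1:ℝ)..1, ((Rp n).eval x)^2)
      = ∫ x in (-1:ℝ)..1, (Rp n).eval x * (derivative^[n] (Wp n)).eval x := by
    rw [← Rp]; congr 1; ext x; ring
  rw [h1, shift n (Wp n) (Rp n) (Wp_bd n)]
  have h2 : derivative^[n] (Rp n) = Polynomial.C (((2*n).factorial : ℝ)) := by
    rw [Rp, ← Function.iterate_add_apply]
    have : n + n = 2*n := by ring
    rw [this, iter_deriv_Wp]
  rw [h2]
  have h3 : (∫ x in (-1:ℝ)..1, (Polynomial.C (((2*n).factorial : ℝ))).eval x * (Wp n).eval x)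
      = ((2*n).factorial : ℝ) * ((-1:ℝ)^n * Jv n) := by
    simp only [eval_C]
    rw [intervalIntegral.integral_const_mul]
    congr 1
    have : ∀ x : ℝ, (Wp n).eval x = (-1:ℝ)^n * (1 - x^2)^n := by
      intro x
      simp only [Wp, eval_pow, eval_sub, eval_one, eval_X]
      rw [← neg_pow]
      ring_nf
    rw [Jv, ← intervalIntegral.integral_const_mul]
    apply intervalIntegral.integral_congr
    intro x _
    simp only []
    rw [this x]
  rw [h3]
  have : (-1:ℝ)^n * (-1:ℝ)^n = 1 := by
    rw [← mul_pow]; norm_num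
  calc (-1:ℝ)^n * (((2*n).factorial : ℝ) * ((-1:ℝ)^n * Jv n))
      = ((-1:ℝ)^n * (-1:ℝ)^n) * (((2*n).factorial : ℝ) * Jv n) := by ring
    _ = _ := by rw [this]; ring

lemma Rp_coeff_ne (n : ℕ) : (Rp n).coeff n ≠ 0 := by
  rw [Rp_coeff]
  have : (2*n).descFactorial n ≠ 0 := by
    rw [Ne, Nat.descFactorial_eq_zero_iff_lt]
    omega
  exact_mod_cast Nat.cast_ne_zero.mpr this

lemma Rp_zero : Rp 0 = 1 := by simp [Rp, Wp]

lemma span_R : ∀ (m : ℕ) (p : Polynomial ℝ), p.degree ≤ (m : WithBot ℕ) →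
    ∃ c : ℕ → ℝ, p = ∑ k ∈ Finset.range (m+1), Polynomial.C (c k) * Rp k := by
  intro m
  induction m with
  | zero =>
    intro p hp
    refine ⟨fun _ => p.coeff 0, ?_⟩
    rw [Finset.sum_range_one, Rp_zero, mul_one]
    exact Polynomial.eq_C_of_degree_le_zero (by exact_mod_cast hp)
  | succ m ih =>
    intro p hp
    set a := p.coeff (m+1) / (Rp (m+1)).coeff (m+1) with ha
    set q := p - Polynomial.C a * Rp (m+1) with hq
    have hqdeg : q.degree ≤ (m : WithBot ℕ) := by
      rw [Polynomial.degree_le_iff_coeff_zero]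
      intro i hi
      have hi' : m + 1 ≤ i := by
        rcases i with i
        · exact_mod_cast Nat.succ_le_of_lt (by exact_mod_cast hi)
      rcases eq_or_lt_of_le hi' with heq | hlt
      · rw [hq]
        simp only [Polynomial.coeff_sub, Polynomial.coeff_C_mul]
        rw [← heq, ha]
        field_simp [Rp_coeff_ne (m+1)]
        ring
      · rw [hq]
        simp only [Polynomial.coeff_sub, Polynomial.coeff_C_mul]
        rw [Polynomial.coeff_eq_zero_of_degree_lt (lt_of_le_of_lt hp (by exact_mod_cast hlt)),
          Polynomial.coeff_eq_zero_of_degree_lt (lt_of_le_of_lt (Rp_degree (m+1)) (by exact_mod_cast hlt))]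
        ring
    obtain ⟨c, hc⟩ := ih q hqdeg
    refine ⟨fun k => if k = m+1 then a else c k, ?_⟩
    rw [Finset.sum_range_succ]
    simp only [if_pos]
    have : ∑ k ∈ Finset.range (m+1), Polynomial.C (if k = m+1 then a else c k) * Rp k
        = ∑ k ∈ Finset.range (m+1), Polynomial.C (c k) * Rp k := by
      apply Finset.sum_congr rfl
      intro k hk
      rw [if_neg (by simp at hk; omega)]
    rw [this, ← hc, hq]
    ring

lemma ortho2 {j k : ℕ} (hjk : j ≠ k) :
    ∫ x in (-1:ℝ)..1, (Rp j).eval x * (Rp k).eval x = 0 := by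
  rcases lt_or_gt_of_ne hjk with h | h
  · exact ortho (lt_of_le_of_lt (Rp_degree j) (by exact_mod_cast h))
  · have := ortho (n := j) (q := Rp k) (lt_of_le_of_lt (Rp_degree k) (by exact_mod_cast h))
    rw [← this]
    congr 1; ext x; ring

lemma sum_odd (n : ℕ) : ∑ k ∈ Finset.range n, (2*(k:ℝ)+1) = (n:ℝ)^2 := by
  induction n with
  | zero => simp
  | succ n ih => rw [Finset.sum_range_succ, ih]; push_cast; ring

lemma trace_ineq (m : ℕ) (p : Polynomial ℝ) (hp : p.degree ≤ (m : WithBot ℕ)) :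
    (p.eval 1)^2 ≤ (((m:ℝ)+1)^2/2) * ∫ x in (-1:ℝ)..1, (p.eval x)^2 := by
  obtain ⟨c, hc⟩ := span_R m p hp
  set s := Finset.range (m+1) with hs
  set h : ℕ → ℝ := fun k => ((2*k).factorial : ℝ) * Jv k with hh
  set r : ℕ → ℝ := fun k => (2:ℝ)^k * (k.factorial : ℝ) with hr
  have hpos : ∀ k, 0 < h k := fun k =>
    mul_pos (by exact_mod_cast (2*k).factorial_pos) (Jv_pos k)
  have hevalx : ∀ x : ℝ, p.eval x = ∑ k ∈ s, c k * (Rp k).eval x := by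
    intro x
    rw [hc]
    rw [Polynomial.eval_finset_sum]
    simp
  have heval1 : p.eval 1 = ∑ k ∈ s, c k * r k := by
    rw [hevalx 1]
    exact Finset.sum_congr rfl fun k _ => by rw [Rp_eval_one k]
  -- Parseval
  have hnorm : (∫ x in (-1:ℝ)..1, (p.eval x)^2) = ∑ k ∈ s, (c k)^2 * h k := by
    have step1 : (∫ x in (-1:ℝ)..1, (p.eval x)^2)
        = ∑ j ∈ s, ∫ x in (-1:ℝ)..1, (c j * (Rp j).eval x) * p.eval x := by
      rw [← intervalIntegral.integral_finset_sum]
      · congr 1; ext x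
        rw [← Finset.sum_mul, ← hevalx x]; ring
      · intro j _
        exact (((continuous_const.mul (Rp j).continuous)).mul p.continuous).intervalIntegrable _ _
    rw [step1]
    apply Finset.sum_congr rfl
    intro j hj
    have inner : (∫ x in (-1:ℝ)..1, (c j * (Rp j).eval x) * p.eval x)
        = ∑ k ∈ s, c j * c k * ∫ x in (-1:ℝ)..1, (Rp j).eval x * (Rp k).eval x := by
      have : ∀ x : ℝ, (c j * (Rp j).eval x) * p.eval x
          = ∑ k ∈ s, (c j * c k) * ((Rp j).eval x * (Rp k).eval x) := by
        intro x
        rw [hevalx x, Finset.mul_sum]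
        exact Finset.sum_congr rfl fun k _ => by ring
      rw [intervalIntegral.integral_congr (fun x _ => this x),
        intervalIntegral.integral_finset_sum]
      · exact Finset.sum_congr rfl fun k _ => by
          rw [intervalIntegral.integral_const_mul]
      · intro k _
        exact (continuous_const.mul ((Rp j).continuous.mul (Rp k).continuous)).intervalIntegrable _ _
    rw [inner]
    rw [Finset.sum_eq_single j]
    · have : (∫ x in (-1:ℝ)..1, (Rp j).eval x * (Rp j).eval x)
          = ((2*j).factorial : ℝ) * Jv j := by
        rw [← Rnormsq j]; congr 1; ext x; ring
      rw [this, hh]; ring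
    · intro k _ hkj
      rw [ortho2 (Ne.symm hkj)]; ring
    · intro hjs; exact absurd hj hjs
  -- Cauchy–Schwarz
  set f : ℕ → ℝ := fun k => r k / Real.sqrt (h k) with hf
  set g : ℕ → ℝ := fun k => c k * Real.sqrt (h k) with hg
  have hsq : ∀ k, Real.sqrt (h k) ^ 2 = h k := fun k => Real.sq_sqrt (hpos k).le
  have hsne : ∀ k, Real.sqrt (h k) ≠ 0 := fun k =>
    ne_of_gt (Real.sqrt_pos.mpr (hpos k))
  have hfg : ∀ k, f k * g k = c k * r k := by
    intro k
    have : f k * g k = c k * r k * (Real.sqrt (h k) * (Real.sqrt (h k))⁻¹) := by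
      rw [hf, hg]; ring
    rw [this, mul_inv_cancel₀ (hsne k), mul_one]
  have hf2 : ∀ k, f k ^ 2 = (2*(k:ℝ)+1)/2 := by
    intro k
    rw [hf]
    rw [div_pow, hsq k]
    have hr2 : r k ^ 2 = 4^k * ((k.factorial : ℝ))^2 := by
      rw [hr, mul_pow, ← pow_mul, mul_comm k 2, pow_mul]
      norm_num
    rw [hr2]
    have hJ := Jv_val k
    have hhk := hpos k
    rw [hh] at hhk ⊢
    field_simp
    rw [div_eq_iff (Jv_pos k).ne']
    linarith [hJ]
  have hg2 : ∀ k, g k ^ 2 = (c k)^2 * h k := by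
    intro k; rw [hg, mul_pow, hsq k]
  have cs := Finset.sum_mul_sq_le_sq_mul_sq s f g
  have e1 : ∑ k ∈ s, f k * g k = ∑ k ∈ s, c k * r k :=
    Finset.sum_congr rfl fun k _ => hfg k
  have e2 : ∑ k ∈ s, f k ^ 2 = (((m:ℝ)+1)^2)/2 := by
    rw [Finset.sum_congr rfl fun k _ => hf2 k]
    rw [← Finset.sum_div, sum_odd (m+1)]
    push_cast; ring
  have e3 : ∑ k ∈ s, g k ^ 2 = ∫ x in (-1:ℝ)..1, (p.eval x)^2 := by
    rw [Finset.sum_congr rfl fun k _ => hg2 k, hnorm]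
  rw [e1, e2, e3] at cs
  rw [heval1]
  exact cs

end NitscheAux

/-- Uniform coercivity of the symmetric Nitsche bilinear form: for every
`γ > 1/2` there is a constant `C > 0`, independent of `N`, such that for every
`N ≥ 1` and every polynomial `ψ` of degree at most `N` with `ψ(−1) = 0`,
`A_N(ψ,ψ) ≥ C·(∫ψ'² + N²ψ(1)²)`. -/
theorem nitsche_symmetric_uniform_coercivity :
    ∀ γ : ℝ, 1 / 2 < γ → ∃ C > 0, ∀ N : ℕ, 1 ≤ N →
      ∀ ψ : Polynomial ℝ, ψ.degree ≤ N → ψ.eval (-1) = 0 →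
        (∫ x in (-1 : ℝ)..1, (ψ.derivative.eval x) ^ 2)
            - 2 * ψ.derivative.eval 1 * ψ.eval 1 + γ * (N : ℝ) ^ 2 * (ψ.eval 1) ^ 2
          ≥ C * ((∫ x in (-1 : ℝ)..1, (ψ.derivative.eval x) ^ 2)
              + (N : ℝ) ^ 2 * (ψ.eval 1) ^ 2) := by
  intro γ hγ
  set s : ℝ := (γ - 1/2)/2 with hsdef
  have hs : 0 < s := by rw [hsdef]; linarith
  have hγs : γ = 1/2 + 2*s := by rw [hsdef]; ring
  set C : ℝ := min (2*s/(1+2*s)) s with hC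
  have hC1 : C ≤ 2*s/(1+2*s) := min_le_left _ _
  have hC2 : C ≤ s := min_le_right _ _
  have hCpos : 0 < C := lt_min (div_pos (by linarith) (by linarith)) hs
  refine ⟨C, hCpos, ?_⟩
  intro N hN ψ hψ _
  set D : ℝ := ∫ x in (-1 : ℝ)..1, (ψ.derivative.eval x) ^ 2 with hD
  set a : ℝ := ψ.eval 1 with hadef
  set b : ℝ := ψ.derivative.eval 1 with hbdef
  set M : ℝ := (N : ℝ)^2 with hM
  have hMpos : 0 < M := by
    have hN' : (0:ℝ) < N := by exact_mod_cast hN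
    rw [hM]; positivity
  have hDpos : 0 ≤ D := by
    rw [hD]
    apply intervalIntegral.integral_nonneg (by norm_num)
    intro x _
    positivity
  -- trace inequality for ψ'
  have hb2 : b^2 ≤ (M/2) * D := by
    have hdeg : (ψ.derivative).degree ≤ ((N - 1 : ℕ) : WithBot ℕ) := by
      refine le_trans degree_le_natDegree ?_
      have h1 : ψ.natDegree ≤ N := natDegree_le_iff_degree_le.mpr hψ
      have h2 : ψ.derivative.natDegree ≤ N - 1 :=
        le_trans (natDegree_derivative_le ψ) (by omega)
      exact_mod_cast Nat.cast_le.mpr h2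
    have := trace_ineq (N-1) ψ.derivative hdeg
    have hcast : (((N-1 : ℕ):ℝ) + 1) = (N:ℝ) := by
      have := Nat.cast_sub hN (R := ℝ)
      push_cast [this]
      ring
    rw [hcast] at this
    rw [hbdef, hM, hD]
    convert this using 2
  -- algebra
  have ht : 0 < (1/2+s)*M := by positivity
  have hkey : ((1/2+s)*M) * ((D - 2*b*a + γ*M*a^2) - C*(D + M*a^2))
      = (b - (1/2+s)*M*a)^2 + ((M/2)*D - b^2) + M*(s - (1/2+s)*C)*D
        + (1/2+s)*M^2*(s-C)*a^2 := by
    rw [hγs]; ring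
  have hsC : 0 ≤ s - (1/2+s)*C := by
    have h1 : (1/2+s)*C ≤ (1/2+s)*(2*s/(1+2*s)) :=
      mul_le_mul_of_nonneg_left hC1 (by linarith)
    have h2 : (1/2+s)*(2*s/(1+2*s)) = s := by
      field_simp
    linarith [h1, h2.le]
  have hrhs : 0 ≤ (b - (1/2+s)*M*a)^2 + ((M/2)*D - b^2) + M*(s - (1/2+s)*C)*D
        + (1/2+s)*M^2*(s-C)*a^2 := by
    have t1 : 0 ≤ (b - (1/2+s)*M*a)^2 := sq_nonneg _
    have t2 : 0 ≤ (M/2)*D - b^2 := by linarith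
    have t3 : 0 ≤ M*(s - (1/2+s)*C)*D := by positivity
    have t4 : 0 ≤ (1/2+s)*M^2*(s-C)*a^2 := by
      have : 0 ≤ s - C := by linarith
      positivity
    linarith
  have := (mul_nonneg_iff_of_pos_left ht).mp (hkey ▸ hrhs)
  linarith
end
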